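/- Let p ≥ 5 be a prime and A = -ζ_p^{d+1} where d = (p-1)/2, so that A is a primitive 2p-th root of unity with A^2 = ζ_p. Then A^4 - 1 + A^{-4} is a unit in ℤ[ζ_p]. -/

import Mathlib

/-- Let `p ≥ 5` be a prime and `A = -ζ^(d+1)` where `d = (p-1)/2`, so `A` is a
primitive `2p`-th root of unity with `A² = ζ`. Then `A⁴ - 1 + A⁻⁴` is a unit. -/
theorem stmt_3 (O : Type*) [CommRing O] [IsDomain O] (p : ℕ) (hp : p.Prime)
    (hp5 : 5 ≤ p) (ζ : Oˣ) (hζ : IsPrimitiveRoot ζ p)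
    (A : Oˣ) (hA : A = -ζ ^ ((p - 1) / 2 + 1)) :
    IsUnit ((A : O) ^ 4 - 1 + ((A⁻¹ : Oˣ) : O) ^ 4) := by
  have hodd : p % 2 = 1 := Nat.odd_iff.mp (hp.odd_of_ne_two (by omega))
  set a : O := (A : O) with ha
  set b : O := ((A⁻¹ : Oˣ) : O) with hb
  set z : O := (ζ : O) with hzdef
  have hab : b * a = 1 := by
    rw [ha, hb, ← Units.val_mul, inv_mul_cancel, Units.val_one]
  -- A^4 = ζ^2
  have hA4u : A ^ 4 = ζ ^ 2 := by
    rw [hA]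
    have h1 : (-ζ ^ ((p - 1) / 2 + 1)) ^ 4 = ζ ^ (((p - 1) / 2 + 1) * 4) := by
      rw [Even.neg_pow (by decide), ← pow_mul]
    rw [h1, show ((p - 1) / 2 + 1) * 4 = p * 2 + 2 by omega, pow_add, pow_mul,
      hζ.pow_eq_one, one_pow, one_mul]
  have ha4 : a ^ 4 = z ^ 2 := by
    rw [ha, hzdef, ← Units.val_pow_eq_pow_val, ← Units.val_pow_eq_pow_val, hA4u]
  have hzp : z ^ p = 1 := by
    rw [hzdef, ← Units.val_pow_eq_pow_val, hζ.pow_eq_one, Units.val_one]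
  -- w = z^6 satisfies w^(p+1) = w and w ≠ 1
  set w : O := z ^ 6 with hw
  have hwp : w ^ (p + 1) = w := by
    rw [hw, ← pow_mul, show 6 * (p + 1) = p * 6 + 6 by ring, pow_add, pow_mul,
      hzp, one_pow, one_mul]
  have hwne : w ≠ 1 := by
    intro h
    have h6 : (ζ ^ 6 : Oˣ) = 1 := by
      ext
      simpa [hw, hzdef, Units.val_pow_eq_pow_val] using h
    have hdvd : p ∣ 6 := (hζ.pow_eq_one_iff_dvd 6).mp h6
    have := Nat.le_of_dvd (by norm_num) hdvd
    interval_cases p <;> omega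
  -- (w+1) is a unit
  set c : ℕ := (p + 1) / 2 with hc
  have hc2 : 2 * c = p + 1 := by omega
  set S : O := ∑ i ∈ Finset.range c, (w ^ 2) ^ i with hS
  have hgeom : S * (w ^ 2 - 1) = w - 1 := by
    rw [hS, geom_sum_mul, ← pow_mul, show 2 * c = p + 1 from hc2, hwp]
  have hkey : (S * (w + 1) - 1) * (w - 1) = 0 := by
    have : w ^ 2 - 1 = (w + 1) * (w - 1) := by ring
    rw [this] at hgeom
    linear_combination hgeom
  have hwu : IsUnit (w + 1) := by
    rcases mul_eq_zero.mp hkey with h | h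
    · exact IsUnit.of_mul_eq_one S (by linear_combination h)
    · exact absurd (by linear_combination h : w = 1) hwne
  -- the expression times a unit-ish factor equals w + 1
  have hb4 : b ^ 4 * a ^ 4 = 1 := by rw [← mul_pow, hab, one_pow]
  have hfinal : (a ^ 4 - 1 + b ^ 4) * (a ^ 4 * (a ^ 4 + 1)) = w + 1 := by
    have hz6 : a ^ 4 * (a ^ 4 * a ^ 4) = w := by rw [ha4, hw]; ring
    linear_combination (a ^ 4 + 1) * hb4 + hz6 + (a^4 - 1) * ha4 * 0
  exact isUnit_of_mul_isUnit_left (hfinal ▸ hwu)
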